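/- Let α be an irrational real number and H an additive subgroup of ℚ with 1 ∈ H. Let k ∈ H with k ≠ 0 and z ∈ ℤ be such that v := k + α·z > 0. Then the rational subgroup ℚ(H + αℤ, v) equals the set {h + α·w : h ∈ H, w ∈ ℤ, k·w = h·z} (i.e., the set of all h + α·(hz/k) with h ∈ H such that hz/k ∈ ℤ). -/
import Mathlib


/-- The additive subgroup `H + αℤ` of `ℝ`, for an additive subgroup `H` of `ℚ` and a
real number `α`. -/
def mixZSubgroup (H : AddSubgroup ℚ) (α : ℝ) : AddSubgroup ℝ where
  carrier := {x : ℝ | ∃ h ∈ H, ∃ w : ℤ, x = (h : ℝ) + α * (w : ℝ)}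
  zero_mem' := ⟨0, H.zero_mem, 0, by simp⟩
  add_mem' := by
    rintro x y ⟨h1, hh1, w1, rfl⟩ ⟨h2, hh2, w2, rfl⟩
    exact ⟨h1 + h2, H.add_mem hh1 hh2, w1 + w2, by push_cast; ring⟩
  neg_mem' := by
    rintro x ⟨h, hh, w, rfl⟩
    exact ⟨-h, H.neg_mem hh, -w, by push_cast; ring⟩

/-- Lemma 4.5: Let `α` be irrational, `H ≤ ℚ` with `1 ∈ H`, `k ∈ H`
nonzero, `z ∈ ℤ`, and `v = k + αz > 0`. Then the rational subgroup `ℚ(H + αℤ, v)`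
(elements `x` of `H + αℤ` with `m • x = q • v` for some `m ≥ 1`, `q ∈ ℤ`) equals
`{h + α(hz/k) : h ∈ H, hz/k ∈ ℤ}`. -/
theorem rationalSubgroup_of_mixZ
    (α : ℝ) (hα : Irrational α)
    (H : AddSubgroup ℚ) (h1H : (1 : ℚ) ∈ H)
    (k : ℚ) (hkH : k ∈ H) (hk : k ≠ 0) (z : ℤ)
    (v : ℝ) (hv : v = (k : ℝ) + α * (z : ℝ)) (hvpos : 0 < v) :
    {x : ℝ | x ∈ mixZSubgroup H α ∧ ∃ m : ℕ, 1 ≤ m ∧ ∃ q : ℤ, (m : ℝ) * x = (q : ℝ) * v}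
      = {x : ℝ | ∃ h ∈ H, ∃ w : ℤ, k * (w : ℚ) = h * (z : ℚ) ∧
          x = (h : ℝ) + α * (w : ℝ)} := by
  subst hv
  ext x
  simp only [Set.mem_setOf_eq]
  constructor
  · rintro ⟨⟨h, hh, w, rfl⟩, m, hm, q, heq⟩
    -- heq : m * (h + α w) = q * (k + α z)
    have hA : ((m : ℤ) * w - q * z : ℤ) ≠ 0 → False := by
      intro hA0
      apply hα
      refine ⟨((q * k - (m : ℤ) * h) / (((m : ℤ) * w - q * z : ℤ) : ℚ)), ?_⟩
      have hAr : (((m : ℤ) * w - q * z : ℤ) : ℝ) ≠ 0 := by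
        exact_mod_cast hA0
      have key : α * (((m : ℤ) * w - q * z : ℤ) : ℝ) = ((q * k - (m : ℤ) * h : ℚ) : ℝ) := by
        push_cast
        linear_combination heq
      push_cast
      push_cast at key hAr
      field_simp
      linear_combination -heq
    have hAz : ((m : ℤ) * w - q * z : ℤ) = 0 := by
      by_contra h'; exact hA h'
    have hwz : (m : ℤ) * w = q * z := by linarith [hAz]
    have hB : (m : ℚ) * h = q * k := by
      have : ((m : ℚ) * h : ℚ) = ((q * k : ℚ) : ℚ) := by
        have : ((m : ℝ) * (h : ℝ)) = (q : ℝ) * (k : ℝ) := by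
          have hw : ((m : ℝ) * (w : ℝ)) = (q : ℝ) * (z : ℝ) := by
            exact_mod_cast hwz
          linear_combination heq - α * hw
        exact_mod_cast this
      exact this
    refine ⟨h, hh, w, ?_, rfl⟩
    have hm0 : (m : ℚ) ≠ 0 := by
      exact_mod_cast Nat.one_le_iff_ne_zero.mp hm
    have hwzQ : (m : ℚ) * w = q * z := by exact_mod_cast hwz
    have : (m : ℚ) * (k * w) = (m : ℚ) * (h * z) := by
      calc (m : ℚ) * (k * w) = k * ((m : ℚ) * w) := by ring
        _ = k * (q * z) := by rw [hwzQ]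
        _ = ((q : ℚ) * k) * z := by ring
        _ = ((m : ℚ) * h) * z := by rw [hB]
        _ = (m : ℚ) * (h * z) := by ring
    exact mul_left_cancel₀ hm0 this
  · rintro ⟨h, hh, w, hkw, rfl⟩
    refine ⟨⟨h, hh, w, rfl⟩, (h / k).den, (h / k).pos, (h / k).num, ?_⟩
    set r := h / k with hr
    have hden : (r.den : ℚ) * r = r.num := Rat.den_mul_eq_num r
    have hhk : h = r * k := by
      rw [hr]; field_simp
    have h1 : (r.den : ℚ) * h = r.num * k := by
      rw [hhk]; rw [← mul_assoc, hden]
    have hw : (w : ℚ) = r * z := by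
      rw [hr]
      field_simp
      linarith [hkw]
    have h2 : (r.den : ℚ) * w = r.num * z := by
      rw [hw, ← mul_assoc, hden]
    have h1R : ((r.den : ℝ)) * (h : ℝ) = (r.num : ℝ) * (k : ℝ) := by
      exact_mod_cast h1
    have h2R : ((r.den : ℝ)) * (w : ℝ) = (r.num : ℝ) * (z : ℝ) := by
      exact_mod_cast h2
    linear_combination h1R + α * h2R
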